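/- Let 𝒳 ⊆ ℝ^d, 𝒳' ⊆ ℝ^{d'}, 𝒜 finite, and suppose g : 𝒳 × 𝒜 → 𝒳' satisfies g(·,a) continuous and g(x,·) injective for each x. Let Â be finite, q̂ : Â × 𝒳 × 𝒳' → [0,1] with ∑_â q̂(â|x,x') = 1 and each q̂(â|·,·) continuous, and ĝ : 𝒳 × Â → 𝒳' arbitrary. Fix a ∈ 𝒜 and a set S ⊆ 𝒳. Suppose for all x ∈ S: ∑_â q̂(â | x, g(x,a)) ‖g(x,a) − ĝ(x,â)‖² = 0 and the entropy H(q̂(·|x, g(x,a))) = 0. Then there exists a function v : S → Â with q̂(â|x,g(x,a)) = 1{â = v(x)} and g(x,a) = ĝ(x, v(x)) for all x ∈ S. If moreover S is connected, v is constant on S. -/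

import Mathlib

/-- Determinism and reconstruction: zero entropy forces the encoder to be a point
mass at some `v x`, zero reconstruction error forces the decoder to reproduce
`g x a` at the chosen latent action, and connectedness of `S` forces `v` to be
constant. -/
theorem determinism_and_reconstruction
    {d d' : ℕ} {A Ahat : Type*} [Fintype A] [Fintype Ahat] [DecidableEq Ahat]
    (𝒳 : Set (EuclideanSpace ℝ (Fin d))) (𝒳' : Set (EuclideanSpace ℝ (Fin d')))
    (g : EuclideanSpace ℝ (Fin d) → A → EuclideanSpace ℝ (Fin d'))
    (hgcont : ∀ a, ContinuousOn (fun x => g x a) 𝒳)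
    (hgmap : ∀ a, ∀ x ∈ 𝒳, g x a ∈ 𝒳')
    (hginj : ∀ x, ∀ a₁ a₂ : A, a₁ ≠ a₂ → g x a₁ ≠ g x a₂)
    (qhat : Ahat → EuclideanSpace ℝ (Fin d) → EuclideanSpace ℝ (Fin d') → ℝ)
    (hqmem : ∀ ahat x x', qhat ahat x x' ∈ Set.Icc (0 : ℝ) 1)
    (hqsum : ∀ x x', ∑ ahat, qhat ahat x x' = 1)
    (hqcont : ∀ ahat, ContinuousOn
      (fun p : EuclideanSpace ℝ (Fin d) × EuclideanSpace ℝ (Fin d') => qhat ahat p.1 p.2)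
      (𝒳 ×ˢ 𝒳'))
    (ghat : EuclideanSpace ℝ (Fin d) → Ahat → EuclideanSpace ℝ (Fin d'))
    (a : A) (S : Set (EuclideanSpace ℝ (Fin d))) (hSsub : S ⊆ 𝒳)
    (hrec : ∀ x ∈ S, ∑ ahat, qhat ahat x (g x a) * ‖g x a - ghat x ahat‖ ^ 2 = 0)
    (hent : ∀ x ∈ S,
      (-∑ ahat, qhat ahat x (g x a) * Real.log (qhat ahat x (g x a))) = 0) :
    ∃ v : EuclideanSpace ℝ (Fin d) → Ahat,
      (∀ x ∈ S,
        (∀ ahat, qhat ahat x (g x a) = if ahat = v x then 1 else 0) ∧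
        g x a = ghat x (v x)) ∧
      (IsConnected S → ∀ x ∈ S, ∀ y ∈ S, v x = v y) := by
  classical
  have hAne : Nonempty Ahat := by
    by_contra h
    rw [not_nonempty_iff] at h
    have h1 := hqsum 0 0
    simp [Finset.univ_eq_empty] at h1
  -- all probabilities are 0 or 1 on S
  have h01 : ∀ x ∈ S, ∀ ahat, qhat ahat x (g x a) = 0 ∨ qhat ahat x (g x a) = 1 := by
    intro x hx ahat
    have hsum0 : ∑ b, qhat b x (g x a) * Real.log (qhat b x (g x a)) = 0 := by
      have := hent x hx; linarith
    have hnp : ∀ b ∈ Finset.univ, qhat b x (g x a) * Real.log (qhat b x (g x a)) ≤ 0 := by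
      intro b _
      have hm := hqmem b x (g x a)
      exact mul_nonpos_of_nonneg_of_nonpos hm.1 (Real.log_nonpos hm.1 hm.2)
    have hz := (Finset.sum_eq_zero_iff_of_nonpos hnp).mp hsum0 ahat (Finset.mem_univ _)
    rcases mul_eq_zero.mp hz with h | h
    · exact Or.inl h
    · rcases Real.log_eq_zero.mp h with h | h | h
      · exact Or.inl h
      · exact Or.inr h
      · exact absurd ((hqmem ahat x (g x a)).1) (by rw [h]; norm_num)
  -- existence of a point mass
  have hex : ∀ x ∈ S, ∃ ahat, qhat ahat x (g x a) = 1 := by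
    intro x hx
    by_contra h
    push_neg at h
    have : ∑ b, qhat b x (g x a) = 0 := Finset.sum_eq_zero (fun b _ =>
      (h01 x hx b).resolve_right (h b))
    rw [hqsum x (g x a)] at this
    norm_num at this
  let v : EuclideanSpace ℝ (Fin d) → Ahat := fun x =>
    if hx : ∃ ahat, qhat ahat x (g x a) = 1 then hx.choose else Classical.arbitrary Ahat
  have hv1 : ∀ x ∈ S, qhat (v x) x (g x a) = 1 := by
    intro x hx
    have h := hex x hx
    simp only [v, dif_pos h]
    exact h.choose_spec
  have hform : ∀ x ∈ S, ∀ ahat, qhat ahat x (g x a) = if ahat = v x then 1 else 0 := by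
    intro x hx ahat
    by_cases he : ahat = v x
    · rw [he, if_pos rfl]; exact hv1 x hx
    · rw [if_neg he]
      have hsum : ∑ b ∈ Finset.univ.erase (v x), qhat b x (g x a) = 0 := by
        have h := Finset.sum_erase_add Finset.univ (fun b => qhat b x (g x a))
          (Finset.mem_univ (v x))
        beta_reduce at h
        rw [hqsum x (g x a), hv1 x hx] at h
        linarith
      exact (Finset.sum_eq_zero_iff_of_nonneg (fun b _ => (hqmem b x (g x a)).1)).mp hsum
        ahat (Finset.mem_erase.mpr ⟨he, Finset.mem_univ _⟩)
  have hrecon : ∀ x ∈ S, g x a = ghat x (v x) := by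
    intro x hx
    have hnn : ∀ b ∈ Finset.univ, (0:ℝ) ≤ qhat b x (g x a) * ‖g x a - ghat x b‖ ^ 2 :=
      fun b _ => mul_nonneg (hqmem b x (g x a)).1 (by positivity)
    have hz := (Finset.sum_eq_zero_iff_of_nonneg hnn).mp (hrec x hx) (v x) (Finset.mem_univ _)
    rw [hv1 x hx, one_mul] at hz
    have : ‖g x a - ghat x (v x)‖ = 0 := by
      nlinarith [norm_nonneg (g x a - ghat x (v x))]
    rw [norm_eq_zero, sub_eq_zero] at this
    exact this
  refine ⟨v, fun x hx => ⟨hform x hx, hrecon x hx⟩, ?_⟩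
  intro hconn x hx y hy
  by_contra hne
  set f : EuclideanSpace ℝ (Fin d) → ℝ := fun t => qhat (v x) t (g t a) with hf
  have hfc : ContinuousOn f S := by
    apply ((hqcont (v x)).comp
      (ContinuousOn.prodMk continuousOn_id ((hgcont a).mono hSsub)))
    intro t ht
    exact Set.mk_mem_prod (hSsub ht) (hgmap a t (hSsub ht))
  have hfx : f x = 1 := hv1 x hx
  have hfy : f y = 0 := by
    have := hform y hy (v x)
    rwa [if_neg hne] at this
  have hiv := (hconn.isPreconnected).intermediate_value hy hx hfc
  have hmem : (1/2 : ℝ) ∈ Set.Icc (f y) (f x) := by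
    rw [hfx, hfy]; norm_num
  obtain ⟨z, hz, hfz⟩ := hiv hmem
  have := hform z hz (v x)
  rw [hf] at hfz
  simp only [hfz] at this
  by_cases h : v x = v z <;> simp [h] at this
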